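/- Identification of the performance-above-random-replacement parameter: Assume no unmeasured confounding and that for every b ∈ Fin m, π(b|X) > 0 P-a.s. Let (A*, π*) be the uniform stochastic intervention, i.e. π*(b|x) = 1/m for all b ∈ Fin m and x ∈ 𝒳. Fix a ∈ Fin m and a measurable set 𝒳' ⊆ 𝒳 with P(A = a, X ∈ 𝒳') > 0. Then E[f(X, A*, U) | A = a, X ∈ 𝒳'] = (1/m)·Σ_{b ∈ Fin m} E[μ(b, X) | A = a, X ∈ 𝒳']. -/

import Mathlib

open MeasureTheory ProbabilityTheory
open scoped ENNReal NNReal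

lemma integrable_of_bdd {Ω : Type*} [MeasurableSpace Ω] {μ : Measure Ω} [IsFiniteMeasure μ]
    {g : Ω → ℝ} (hg : AEStronglyMeasurable g μ) {C : ℝ} (h : ∀ x, |g x| ≤ C) :
    Integrable g μ :=
  ⟨hg, HasFiniteIntegral.of_bounded (C := C) (Filter.Eventually.of_forall fun x => by
    simpa [Real.norm_eq_abs] using h x)⟩

lemma key_lemma {Ω 𝒳 𝒰 : Type*} [MeasurableSpace Ω] [StandardBorelSpace Ω]
    [MeasurableSpace 𝒳] [MeasurableSpace 𝒰]
    (P : Measure Ω) [IsProbabilityMeasure P]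
    {m : ℕ} {X : Ω → 𝒳} {U : Ω → 𝒰} {A : Ω → Fin m}
    (hX : Measurable X) (hU : Measurable U) (hA : Measurable A)
    {π : 𝒳 → ℝ} (hπmeas : Measurable π)
    (hπ01 : ∀ x, 0 ≤ π x ∧ π x ≤ 1)
    (c : Fin m)
    (hπ : (fun ω => π (X ω)) =ᵐ[P]
      P[fun ω => (if A ω = c then (1 : ℝ) else 0) | MeasurableSpace.comap X inferInstance])
    (hNUC : CondIndepFun (MeasurableSpace.comap X inferInstance) hX.comap_le A U P)
    {g : 𝒳 × 𝒰 → ℝ} (hg : Measurable g) {C : ℝ} (hgbdd : ∀ p, |g p| ≤ C)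
    {s : Set 𝒳} (hs : MeasurableSet s) :
    ∫ ω in X ⁻¹' s, (if A ω = c then (1 : ℝ) else 0) * g (X ω, U ω) ∂P
      = ∫ ω in X ⁻¹' s, π (X ω) * g (X ω, U ω) ∂P := by
  classical
  have hmX : MeasurableSpace.comap X inferInstance ≤ _ := hX.comap_le
  haveI : SigmaFinite (P.trim hmX) := by
    have : IsFiniteMeasure (P.trim hmX) := isFiniteMeasure_trim hmX
    infer_instance
  have hXmX : Measurable[MeasurableSpace.comap X inferInstance] X := Measurable.of_comap_le le_rfl
  have hAc : MeasurableSet {ω | A ω = c} := hA (measurableSet_singleton c)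
  have hπXsm : StronglyMeasurable[MeasurableSpace.comap X inferInstance] (fun ω => π (X ω)) :=
    (hπmeas.comp hXmX).stronglyMeasurable
  -- rectangle identity at the conditional expectation level
  have h1 : ∀ t : Set 𝒰, MeasurableSet t →
      P[fun ω => (if A ω = c then (1 : ℝ) else 0)
          * (U ⁻¹' t).indicator (fun _ => (1 : ℝ)) ω | MeasurableSpace.comap X inferInstance]
        =ᵐ[P]
      P[fun ω => π (X ω) * (U ⁻¹' t).indicator (fun _ => (1 : ℝ)) ω | MeasurableSpace.comap X inferInstance] := by
    intro t ht
    have hfun : (fun ω => (if A ω = c then (1 : ℝ) else 0)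
        * (U ⁻¹' t).indicator (fun _ => (1 : ℝ)) ω)
        = (A ⁻¹' {c} ∩ U ⁻¹' t).indicator (fun _ => (1 : ℝ)) := by
      funext ω
      by_cases h1 : A ω = c <;> by_cases h2 : U ω ∈ t <;>
        simp [Set.indicator_apply, h1, h2]
    have hprod := (condIndepFun_iff_condExp_inter_preimage_eq_mul
        (hm' := hX.comap_le) hA hU).mp hNUC {c} t (measurableSet_singleton c) ht
    have hind_int : Integrable ((U ⁻¹' t).indicator (fun _ => (1 : ℝ))) P :=
      integrable_of_bdd (C := 1)
        ((stronglyMeasurable_const.indicator (hU ht)).aestronglyMeasurable)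
        (fun x => by by_cases h : x ∈ U ⁻¹' t <;> simp [Set.indicator_apply, h])
    have hmul_int : Integrable ((fun ω => π (X ω))
        * (U ⁻¹' t).indicator (fun _ => (1 : ℝ))) P := by
      refine integrable_of_bdd (C := 1) ?_ ?_
      · exact ((hπmeas.comp hX).stronglyMeasurable.mul
          (stronglyMeasurable_const.indicator (hU ht))).aestronglyMeasurable
      · intro x
        by_cases h : x ∈ U ⁻¹' t <;>
          simp [Set.indicator_apply, h, abs_mul, abs_of_nonneg (hπ01 (X x)).1,
            (hπ01 (X x)).2]
    have hpull := condExp_mul_of_stronglyMeasurable_left (m := MeasurableSpace.comap X inferInstance) (μ := P) hπXsm hmul_int hind_int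
    have hAeq : (fun ω => π (X ω)) =ᵐ[P] P[(A ⁻¹' {c}).indicator (fun _ => (1 : ℝ)) | MeasurableSpace.comap X inferInstance] := by
      have : (fun ω => (if A ω = c then (1 : ℝ) else 0))
          = (A ⁻¹' {c}).indicator (fun _ => (1 : ℝ)) := by
        funext ω; by_cases h : A ω = c <;> simp [Set.indicator_apply, h]
      rw [← this]; exact hπ
    calc P[fun ω => (if A ω = c then (1 : ℝ) else 0)
          * (U ⁻¹' t).indicator (fun _ => (1 : ℝ)) ω | MeasurableSpace.comap X inferInstance]
        = P[(A ⁻¹' {c} ∩ U ⁻¹' t).indicator (fun _ => (1 : ℝ)) | MeasurableSpace.comap X inferInstance] := by rw [hfun]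
      _ =ᵐ[P] fun ω => (P[(A ⁻¹' {c}).indicator (fun _ => (1 : ℝ)) | MeasurableSpace.comap X inferInstance]) ω
            * (P[(U ⁻¹' t).indicator (fun _ => (1 : ℝ)) | MeasurableSpace.comap X inferInstance]) ω := hprod
      _ =ᵐ[P] fun ω => π (X ω) * (P[(U ⁻¹' t).indicator (fun _ => (1 : ℝ)) | MeasurableSpace.comap X inferInstance]) ω := by
          filter_upwards [hAeq] with ω hω
          rw [← hω]
      _ =ᵐ[P] P[(fun ω => π (X ω)) * (U ⁻¹' t).indicator (fun _ => (1 : ℝ)) | MeasurableSpace.comap X inferInstance] := by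
          have := hpull.symm
          filter_upwards [this] with ω hω
          simpa [Pi.mul_apply] using hω
      _ = P[fun ω => π (X ω) * (U ⁻¹' t).indicator (fun _ => (1 : ℝ)) ω | MeasurableSpace.comap X inferInstance] := rfl
  -- rectangle identity at the integral level
  have h2 : ∀ (t₁ : Set 𝒳) (t₂ : Set 𝒰), MeasurableSet t₁ → MeasurableSet t₂ →
      ∫ ω in X ⁻¹' t₁, (if A ω = c then (1 : ℝ) else 0)
          * (U ⁻¹' t₂).indicator (fun _ => (1 : ℝ)) ω ∂P
        = ∫ ω in X ⁻¹' t₁, π (X ω) * (U ⁻¹' t₂).indicator (fun _ => (1 : ℝ)) ω ∂P := by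
    intro t₁ t₂ ht₁ ht₂
    have hS : MeasurableSet[MeasurableSpace.comap X inferInstance] (X ⁻¹' t₁) := ⟨t₁, ht₁, rfl⟩
    have hint1 : Integrable (fun ω => (if A ω = c then (1 : ℝ) else 0)
        * (U ⁻¹' t₂).indicator (fun _ => (1 : ℝ)) ω) P := by
      refine integrable_of_bdd (C := 1) ?_ ?_
      · exact (((measurable_const.ite hAc measurable_const)).mul
          (measurable_const.indicator (hU ht₂))).aestronglyMeasurable
      · intro x
        by_cases h1 : A x = c <;> by_cases h2 : x ∈ U ⁻¹' t₂ <;>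
          simp [Set.indicator_apply, h1, h2]
    have hint2 : Integrable (fun ω => π (X ω)
        * (U ⁻¹' t₂).indicator (fun _ => (1 : ℝ)) ω) P := by
      refine integrable_of_bdd (C := 1) ?_ ?_
      · exact ((hπmeas.comp hX).mul
          (measurable_const.indicator (hU ht₂))).aestronglyMeasurable
      · intro x
        by_cases h : x ∈ U ⁻¹' t₂ <;>
          simp [Set.indicator_apply, h, abs_mul, abs_of_nonneg (hπ01 (X x)).1,
            (hπ01 (X x)).2]
    rw [← setIntegral_condExp hmX hint1 hS, ← setIntegral_condExp hmX hint2 hS]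
    exact integral_congr_ae (ae_restrict_of_ae (h1 t₂ ht₂))
  -- the two pushforward measures agree
  set V : Ω → 𝒳 × 𝒰 := fun ω => (X ω, U ω) with hVdef
  have hV : Measurable V := hX.prodMk hU
  set dens : Ω → ℝ≥0∞ := fun ω => ((π (X ω)).toNNReal : ℝ≥0∞) with hdens
  have hdensmeas : Measurable (fun ω => (π (X ω)).toNNReal) :=
    (hπmeas.comp hX).real_toNNReal
  set ν₁ : Measure (𝒳 × 𝒰) := Measure.map V (P.restrict ({ω | A ω = c} ∩ X ⁻¹' s)) with hν₁
  set ν₂ : Measure (𝒳 × 𝒰) := Measure.map V ((P.restrict (X ⁻¹' s)).withDensity dens) with hν₂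
  haveI hfin2 : IsFiniteMeasure ((P.restrict (X ⁻¹' s)).withDensity dens) := by
    constructor
    rw [withDensity_apply _ MeasurableSet.univ]
    have hle : ∫⁻ ω in Set.univ, dens ω ∂(P.restrict (X ⁻¹' s))
        ≤ ∫⁻ _ in Set.univ, 1 ∂(P.restrict (X ⁻¹' s)) := by
      refine lintegral_mono fun ω => ?_
      simp only [hdens]
      exact_mod_cast Real.toNNReal_le_one.mpr (hπ01 (X ω)).2
    have hle2 : ∫⁻ _ in Set.univ, (1 : ℝ≥0∞) ∂(P.restrict (X ⁻¹' s)) ≤ 1 := by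
      rw [lintegral_one, Measure.restrict_apply_univ, Measure.restrict_apply_univ]
      exact prob_le_one
    exact lt_of_le_of_lt (le_trans hle hle2) ENNReal.one_lt_top
  have hrect : ∀ (t₁ : Set 𝒳) (t₂ : Set 𝒰), MeasurableSet t₁ → MeasurableSet t₂ →
      ν₁ (t₁ ×ˢ t₂) = ν₂ (t₁ ×ˢ t₂) := by
    intro t₁ t₂ ht₁ ht₂
    have hprodmeas : MeasurableSet (t₁ ×ˢ t₂) := ht₁.prod ht₂
    have hpre : V ⁻¹' (t₁ ×ˢ t₂) = X ⁻¹' t₁ ∩ U ⁻¹' t₂ := by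
      rw [hVdef]; exact Set.mk_preimage_prod X U
    have hseteq1 : (X ⁻¹' t₁ ∩ U ⁻¹' t₂) ∩ ({ω | A ω = c} ∩ X ⁻¹' s)
        = {ω | A ω = c} ∩ (X ⁻¹' (s ∩ t₁) ∩ U ⁻¹' t₂) := by
      ext ω
      simp only [Set.mem_inter_iff, Set.mem_preimage, Set.mem_setOf_eq]
      tauto
    have hseteq2 : (X ⁻¹' t₁ ∩ U ⁻¹' t₂) ∩ X ⁻¹' s
        = X ⁻¹' (s ∩ t₁) ∩ U ⁻¹' t₂ := by
      ext ω
      simp only [Set.mem_inter_iff, Set.mem_preimage, Set.mem_setOf_eq]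
      tauto
    -- compute ν₁
    have e1 : ν₁ (t₁ ×ˢ t₂) = P ({ω | A ω = c} ∩ (X ⁻¹' (s ∩ t₁) ∩ U ⁻¹' t₂)) := by
      rw [hν₁, Measure.map_apply hV hprodmeas, Measure.restrict_apply (hV hprodmeas), hpre,
        hseteq1]
    -- compute ν₂
    have e2 : ν₂ (t₁ ×ˢ t₂) = ∫⁻ ω in X ⁻¹' (s ∩ t₁) ∩ U ⁻¹' t₂, dens ω ∂P := by
      rw [hν₂, Measure.map_apply hV hprodmeas,
        withDensity_apply _ (hV hprodmeas), Measure.restrict_restrict (hV hprodmeas), hpre,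
        hseteq2]
    -- real-valued computation of the left side
    have hLHS : ∫ ω in X ⁻¹' (s ∩ t₁), (if A ω = c then (1 : ℝ) else 0)
        * (U ⁻¹' t₂).indicator (fun _ => (1 : ℝ)) ω ∂P
        = (P ({ω | A ω = c} ∩ (X ⁻¹' (s ∩ t₁) ∩ U ⁻¹' t₂))).toReal := by
      have : (fun ω => (if A ω = c then (1 : ℝ) else 0)
          * (U ⁻¹' t₂).indicator (fun _ => (1 : ℝ)) ω)
          = ({ω | A ω = c} ∩ U ⁻¹' t₂).indicator (fun _ => (1 : ℝ)) := by
        funext ω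
        by_cases h1 : A ω = c <;> by_cases h2 : U ω ∈ t₂ <;>
          simp [Set.indicator_apply, h1, h2]
      have hseteq3 : X ⁻¹' (s ∩ t₁) ∩ ({ω | A ω = c} ∩ U ⁻¹' t₂)
          = {ω | A ω = c} ∩ (X ⁻¹' (s ∩ t₁) ∩ U ⁻¹' t₂) := by
        ext ω
        simp only [Set.mem_inter_iff, Set.mem_preimage, Set.mem_setOf_eq]
        tauto
      rw [this, setIntegral_indicator (hAc.inter (hU ht₂)), setIntegral_const]
      rw [smul_eq_mul, mul_one, hseteq3]; rfl
    -- real-valued computation of the right side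
    have hRHS : ∫ ω in X ⁻¹' (s ∩ t₁), π (X ω)
        * (U ⁻¹' t₂).indicator (fun _ => (1 : ℝ)) ω ∂P
        = ∫ ω in X ⁻¹' (s ∩ t₁) ∩ U ⁻¹' t₂, π (X ω) ∂P := by
      have : (fun ω => π (X ω) * (U ⁻¹' t₂).indicator (fun _ => (1 : ℝ)) ω)
          = (U ⁻¹' t₂).indicator (fun ω => π (X ω)) := by
        funext ω
        by_cases h : U ω ∈ t₂ <;> simp [Set.indicator_apply, h]
      rw [this, setIntegral_indicator (hU ht₂)]
    have hπint : Integrable (fun ω => π (X ω)) (P.restrict (X ⁻¹' (s ∩ t₁) ∩ U ⁻¹' t₂)) :=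
      integrable_of_bdd (C := 1) (hπmeas.comp hX).aestronglyMeasurable.restrict
        (fun x => abs_le.mpr ⟨by linarith [(hπ01 (X x)).1], (hπ01 (X x)).2⟩)
    have e3 : ∫⁻ ω in X ⁻¹' (s ∩ t₁) ∩ U ⁻¹' t₂, dens ω ∂P
        = ENNReal.ofReal (∫ ω in X ⁻¹' (s ∩ t₁) ∩ U ⁻¹' t₂, π (X ω) ∂P) := by
      rw [ofReal_integral_eq_lintegral_ofReal hπint
        (Filter.Eventually.of_forall fun ω => (hπ01 (X ω)).1)]
      rfl
    rw [e1, e2, e3, ← hRHS, ← h2 (s ∩ t₁) t₂ (hs.inter ht₁) ht₂, hLHS,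
      ENNReal.ofReal_toReal (measure_ne_top _ _)]
  have hνeq : ν₁ = ν₂ := by
    refine ext_of_generate_finite _ generateFrom_prod.symm isPiSystem_prod ?_ ?_
    · rintro _ ⟨t₁, ht₁, t₂, ht₂, rfl⟩
      exact hrect t₁ t₂ ht₁ ht₂
    · have := hrect Set.univ Set.univ MeasurableSet.univ MeasurableSet.univ
      rwa [Set.univ_prod_univ] at this
  -- conclude
  have hgV : AEStronglyMeasurable g ν₁ := hg.aestronglyMeasurable
  calc ∫ ω in X ⁻¹' s, (if A ω = c then (1 : ℝ) else 0) * g (X ω, U ω) ∂P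
      = ∫ ω in X ⁻¹' s, ({ω | A ω = c}).indicator (fun ω => g (V ω)) ω ∂P := by
        refine setIntegral_congr_fun (hX hs) fun ω _ => ?_
        by_cases h : A ω = c <;> simp [Set.indicator_apply, h, hVdef]
    _ = ∫ ω in X ⁻¹' s ∩ {ω | A ω = c}, g (V ω) ∂P := setIntegral_indicator hAc
    _ = ∫ ω in {ω | A ω = c} ∩ X ⁻¹' s, g (V ω) ∂P := by rw [Set.inter_comm]
    _ = ∫ p, g p ∂ν₁ := (integral_map hV.aemeasurable hg.aestronglyMeasurable).symm
    _ = ∫ p, g p ∂ν₂ := by rw [hνeq]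
    _ = ∫ ω, g (V ω) ∂((P.restrict (X ⁻¹' s)).withDensity dens) :=
        integral_map hV.aemeasurable hg.aestronglyMeasurable
    _ = ∫ ω, (π (X ω)).toNNReal • g (V ω) ∂(P.restrict (X ⁻¹' s)) :=
        integral_withDensity_eq_integral_smul hdensmeas _
    _ = ∫ ω in X ⁻¹' s, π (X ω) * g (X ω, U ω) ∂P := by
        refine setIntegral_congr_fun (hX hs) fun ω _ => ?_
        rw [NNReal.smul_def, smul_eq_mul, Real.coe_toNNReal _ (hπ01 (X ω)).1]

/-- Identification of the performance-above-random-replacement parameter. -/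
theorem identification_random_replacement
    {Ω 𝒳 𝒰 : Type*} [MeasurableSpace Ω] [StandardBorelSpace Ω]
    [MeasurableSpace 𝒳] [StandardBorelSpace 𝒳]
    [MeasurableSpace 𝒰] [StandardBorelSpace 𝒰]
    (P : Measure Ω) [IsProbabilityMeasure P]
    (m : ℕ) (hm : 1 ≤ m)
    (X : Ω → 𝒳) (U : Ω → 𝒰) (A : Ω → Fin m)
    (hX : Measurable X) (hU : Measurable U) (hA : Measurable A)
    (f : 𝒳 → Fin m → 𝒰 → ℝ)
    (hf : Measurable fun p : 𝒳 × Fin m × 𝒰 => f p.1 p.2.1 p.2.2)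
    (C : ℝ) (hfbdd : ∀ x b u, |f x b u| ≤ C)
    -- propensity scores: π(b|X) is a version of E[1{A=b} | σ(X)]
    (π : Fin m → 𝒳 → ℝ) (hπmeas : ∀ b, Measurable (π b))
    (hπ01 : ∀ b x, 0 ≤ π b x ∧ π b x ≤ 1)
    (hπ : ∀ b, (fun ω => π b (X ω)) =ᵐ[P]
      P[fun ω => (if A ω = b then (1 : ℝ) else 0) | MeasurableSpace.comap X inferInstance])
    -- outcome regression: μ(b,X)·π(b|X) is a version of E[1{A=b}·Y | σ(X)]
    (μreg : Fin m → 𝒳 → ℝ) (hμmeas : ∀ b, Measurable (μreg b))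
    (Cμ : ℝ) (hμbdd : ∀ b x, |μreg b x| ≤ Cμ)
    (hμ : ∀ b, (fun ω => μreg b (X ω) * π b (X ω)) =ᵐ[P]
      P[fun ω => (if A ω = b then (1 : ℝ) else 0) * f (X ω) (A ω) (U ω) |
        MeasurableSpace.comap X inferInstance])
    -- no unmeasured confounding: A ⫫ U | σ(X)
    (hNUC : CondIndepFun (MeasurableSpace.comap X inferInstance) hX.comap_le A U P)
    -- positivity: every player has positive propensity almost surely
    (hpos : ∀ b : Fin m, ∀ᵐ ω ∂P, 0 < π b (X ω))
    -- uniform stochastic intervention: (1/m) is a version of E[1{A*=b} | σ(X, A, U)]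
    (Astar : Ω → Fin m) (hAstar : Measurable Astar)
    (hπstar : ∀ b : Fin m, (fun _ => (1 : ℝ) / m) =ᵐ[P]
      P[fun ω => (if Astar ω = b then (1 : ℝ) else 0) |
        MeasurableSpace.comap (fun ω => (X ω, A ω, U ω)) inferInstance])
    -- focal player and reference population
    (a : Fin m) (𝒳' : Set 𝒳) (h𝒳' : MeasurableSet 𝒳')
    (E : Set Ω) (hE : E = {ω | A ω = a} ∩ {ω | X ω ∈ 𝒳'})
    (hPE : 0 < P E) :
    (∫ ω in E, f (X ω) (Astar ω) (U ω) ∂P) / (P E).toReal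
      = (1 / m) * ∑ b : Fin m,
          (∫ ω in E, μreg b (X ω) ∂P) / (P E).toReal := by
  classical
  have hmX : MeasurableSpace.comap X inferInstance ≤ _ := hX.comap_le
  haveI : SigmaFinite (P.trim hmX) := by
    have : IsFiniteMeasure (P.trim hmX) := isFiniteMeasure_trim hmX
    infer_instance
  have hXmX : Measurable[MeasurableSpace.comap X inferInstance] X :=
    Measurable.of_comap_le le_rfl
  set W : Ω → 𝒳 × Fin m × 𝒰 := fun ω => (X ω, A ω, U ω) with hWdef
  have hW : Measurable W := hX.prodMk (hA.prodMk hU)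
  have hmW : MeasurableSpace.comap W inferInstance ≤ _ := hW.comap_le
  haveI : SigmaFinite (P.trim hmW) := by
    have : IsFiniteMeasure (P.trim hmW) := isFiniteMeasure_trim hmW
    infer_instance
  have hWmW : Measurable[MeasurableSpace.comap W inferInstance] W :=
    Measurable.of_comap_le le_rfl
  have hAa : MeasurableSet {ω | A ω = a} := hA (measurableSet_singleton a)
  have hEmeas : MeasurableSet E := by
    rw [hE]; exact hAa.inter (hX h𝒳')
  have hEmW : MeasurableSet[MeasurableSpace.comap W inferInstance] E := by
    refine ⟨𝒳' ×ˢ ({a} ×ˢ (Set.univ : Set 𝒰)),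
      h𝒳'.prod ((measurableSet_singleton a).prod MeasurableSet.univ), ?_⟩
    ext ω
    simp only [hE, Set.mem_preimage, Set.mem_prod, Set.mem_singleton_iff, Set.mem_univ,
      and_true, Set.mem_inter_iff, Set.mem_setOf_eq, hWdef]
    tauto
  -- per-arm counterfactual outcome functions
  have hgbmeas : ∀ b : Fin m, Measurable (fun p : 𝒳 × 𝒰 => f p.1 b p.2) := fun b =>
    hf.comp (measurable_fst.prodMk (measurable_const.prodMk measurable_snd))
  have hFbmeas : ∀ b : Fin m, Measurable (fun ω => f (X ω) b (U ω)) := fun b =>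
    (hgbmeas b).comp (hX.prodMk hU)
  have hFbint : ∀ b : Fin m, Integrable (fun ω => f (X ω) b (U ω)) P := fun b =>
    integrable_of_bdd (C := C) (hFbmeas b).aestronglyMeasurable (fun ω => hfbdd _ _ _)
  -- Step C: identification of each ∫_E f(X,b,U)
  have hC : ∀ b : Fin m,
      ∫ ω in E, f (X ω) b (U ω) ∂P = ∫ ω in E, μreg b (X ω) ∂P := by
    intro b
    -- pull-out lemma instances
    have hπbXsm : ∀ c : Fin m, StronglyMeasurable[MeasurableSpace.comap X inferInstance]
        (fun ω => π c (X ω)) := fun c => ((hπmeas c).comp hXmX).stronglyMeasurable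
    have hπFbint : ∀ c : Fin m, Integrable ((fun ω => π c (X ω)) * (fun ω => f (X ω) b (U ω))) P := by
      intro c
      refine integrable_of_bdd (C := 1 * |C|) ?_ ?_
      · exact (((hπmeas c).comp hX).mul (hFbmeas b)).aestronglyMeasurable
      · intro x
        rw [Pi.mul_apply, abs_mul]
        refine mul_le_mul ?_ ((hfbdd _ _ _).trans (le_abs_self C)) (abs_nonneg _) zero_le_one
        rw [abs_of_nonneg (hπ01 c (X x)).1]; exact (hπ01 c (X x)).2
    have hpull : ∀ c : Fin m,
        P[(fun ω => π c (X ω)) * (fun ω => f (X ω) b (U ω)) | MeasurableSpace.comap X inferInstance]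
          =ᵐ[P] (fun ω => π c (X ω)) * P[fun ω => f (X ω) b (U ω) | MeasurableSpace.comap X inferInstance] :=
      fun c => condExp_mul_of_stronglyMeasurable_left (hπbXsm c) (hπFbint c) (hFbint b)
    -- conditional expectation of the counterfactual outcome equals μreg b ∘ X
    have hcond1 : (fun ω => μreg b (X ω) * π b (X ω)) =ᵐ[P]
        P[(fun ω => π b (X ω)) * (fun ω => f (X ω) b (U ω)) | MeasurableSpace.comap X inferInstance] := by
      refine ae_eq_condExp_of_forall_setIntegral_eq hmX (hπFbint b) ?_ ?_ ?_
      · intro S _ _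
        refine (integrable_of_bdd (C := Cμ * 1) ?_ ?_).restrict
        · exact (((hμmeas b).comp hX).mul ((hπmeas b).comp hX)).aestronglyMeasurable
        · intro x
          rw [abs_mul]
          refine mul_le_mul (hμbdd b (X x)) ?_ (abs_nonneg _)
            ((abs_nonneg _).trans (hμbdd b (X x)))
          rw [abs_of_nonneg (hπ01 b (X x)).1]; exact (hπ01 b (X x)).2
      · rintro S ⟨s, hs, rfl⟩ _
        have hint_indf : Integrable (fun ω => (if A ω = b then (1 : ℝ) else 0)
            * f (X ω) (A ω) (U ω)) P := by
          refine integrable_of_bdd (C := 1 * |C|) ?_ ?_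
          · exact ((measurable_const.ite (hA (measurableSet_singleton b)) measurable_const).mul
              (hf.comp hW)).aestronglyMeasurable
          · intro x
            rw [abs_mul]
            refine mul_le_mul ?_ ((hfbdd _ _ _).trans (le_abs_self C)) (abs_nonneg _) zero_le_one
            by_cases h : A x = b <;> simp [h]
        calc ∫ ω in X ⁻¹' s, μreg b (X ω) * π b (X ω) ∂P
            = ∫ ω in X ⁻¹' s, (P[fun ω => (if A ω = b then (1 : ℝ) else 0)
                * f (X ω) (A ω) (U ω) | MeasurableSpace.comap X inferInstance]) ω ∂P :=
              integral_congr_ae (ae_restrict_of_ae (hμ b))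
          _ = ∫ ω in X ⁻¹' s, (if A ω = b then (1 : ℝ) else 0) * f (X ω) (A ω) (U ω) ∂P :=
              setIntegral_condExp hmX hint_indf ⟨s, hs, rfl⟩
          _ = ∫ ω in X ⁻¹' s, (if A ω = b then (1 : ℝ) else 0) * f (X ω) b (U ω) ∂P := by
              refine setIntegral_congr_fun (hX hs) fun ω _ => ?_
              by_cases h : A ω = b <;> simp [h]
          _ = ∫ ω in X ⁻¹' s, π b (X ω) * f (X ω) b (U ω) ∂P :=
              key_lemma P hX hU hA (hπmeas b) (hπ01 b) b (hπ b) hNUC (hgbmeas b)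
                (fun p => hfbdd p.1 b p.2) hs
          _ = ∫ ω in X ⁻¹' s, ((fun ω => π b (X ω)) * (fun ω => f (X ω) b (U ω))) ω ∂P := rfl
      · exact StronglyMeasurable.aestronglyMeasurable
          ((((hμmeas b).comp hXmX).mul ((hπmeas b).comp hXmX)).stronglyMeasurable)
    have hcond2 : P[fun ω => f (X ω) b (U ω) | MeasurableSpace.comap X inferInstance]
        =ᵐ[P] fun ω => μreg b (X ω) := by
      filter_upwards [hcond1, hpull b, hpos b] with ω h1 h2 h3
      have h4 : π b (X ω) * (P[fun ω => f (X ω) b (U ω) |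
          MeasurableSpace.comap X inferInstance]) ω = π b (X ω) * μreg b (X ω) := by
        simp only [Pi.mul_apply] at h2
        rw [← h2, ← h1]
        ring
      exact mul_left_cancel₀ (ne_of_gt h3) h4
    -- now the chain of integral identities
    have hS𝒳' : MeasurableSet[MeasurableSpace.comap X inferInstance] (X ⁻¹' 𝒳') :=
      ⟨𝒳', h𝒳', rfl⟩
    have hindint : Integrable (fun ω => μreg b (X ω)
        * (if A ω = a then (1 : ℝ) else 0)) P := by
      refine integrable_of_bdd (C := Cμ * 1) ?_ ?_
      · exact (((hμmeas b).comp hX).mul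
          (measurable_const.ite hAa measurable_const)).aestronglyMeasurable
      · intro x
        rw [abs_mul]
        refine mul_le_mul (hμbdd b (X x)) ?_ (abs_nonneg _)
          ((abs_nonneg _).trans (hμbdd b (X x)))
        by_cases h : A x = a <;> simp [h]
    have hindint' : Integrable (fun ω => (if A ω = a then (1 : ℝ) else 0)) P := by
      refine integrable_of_bdd (C := 1)
        (measurable_const.ite hAa measurable_const).aestronglyMeasurable ?_
      intro x
      by_cases h : A x = a <;> simp [h]
    have hpull2 : P[(fun ω => μreg b (X ω)) * (fun ω => (if A ω = a then (1 : ℝ) else 0)) |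
          MeasurableSpace.comap X inferInstance]
        =ᵐ[P] (fun ω => μreg b (X ω)) * P[fun ω => (if A ω = a then (1 : ℝ) else 0) |
          MeasurableSpace.comap X inferInstance] :=
      condExp_mul_of_stronglyMeasurable_left ((hμmeas b).comp hXmX).stronglyMeasurable
        (by exact hindint) hindint'
    have hEeq : E = X ⁻¹' 𝒳' ∩ {ω | A ω = a} := by
      rw [hE]; ext ω
      simp only [Set.mem_inter_iff, Set.mem_setOf_eq, Set.mem_preimage]
      tauto
    calc ∫ ω in E, f (X ω) b (U ω) ∂P
        = ∫ ω in X ⁻¹' 𝒳', ({ω | A ω = a}).indicator (fun ω => f (X ω) b (U ω)) ω ∂P := by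
          rw [hEeq, ← setIntegral_indicator hAa]
      _ = ∫ ω in X ⁻¹' 𝒳', (if A ω = a then (1 : ℝ) else 0) * f (X ω) b (U ω) ∂P := by
          refine setIntegral_congr_fun (hX h𝒳') fun ω _ => ?_
          by_cases h : A ω = a <;> simp [Set.indicator_apply, h]
      _ = ∫ ω in X ⁻¹' 𝒳', π a (X ω) * f (X ω) b (U ω) ∂P :=
          key_lemma P hX hU hA (hπmeas a) (hπ01 a) a (hπ a) hNUC (hgbmeas b)
            (fun p => hfbdd p.1 b p.2) h𝒳'
      _ = ∫ ω in X ⁻¹' 𝒳', (P[(fun ω => π a (X ω)) * (fun ω => f (X ω) b (U ω)) |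
            MeasurableSpace.comap X inferInstance]) ω ∂P :=
          (setIntegral_condExp hmX (hπFbint a) hS𝒳').symm
      _ = ∫ ω in X ⁻¹' 𝒳', (P[(fun ω => μreg b (X ω)) * (fun ω => (if A ω = a then (1 : ℝ) else 0)) |
            MeasurableSpace.comap X inferInstance]) ω ∂P := by
          refine integral_congr_ae (ae_restrict_of_ae ?_)
          filter_upwards [hpull a, hcond2, hπ a, hpull2] with ω h1 h2 h3 h4
          rw [h1]
          simp only [Pi.mul_apply] at h4 ⊢
          rw [h2, h4, ← h3]
          ring
      _ = ∫ ω in X ⁻¹' 𝒳', ((fun ω => μreg b (X ω)) * (fun ω => (if A ω = a then (1 : ℝ) else 0))) ω ∂P :=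
          setIntegral_condExp hmX (by exact hindint) hS𝒳'
      _ = ∫ ω in X ⁻¹' 𝒳', ({ω | A ω = a}).indicator (fun ω => μreg b (X ω)) ω ∂P := by
          refine setIntegral_congr_fun (hX h𝒳') fun ω _ => ?_
          by_cases h : A ω = a <;> simp [Set.indicator_apply, h]
      _ = ∫ ω in X ⁻¹' 𝒳' ∩ {ω | A ω = a}, μreg b (X ω) ∂P := setIntegral_indicator hAa
      _ = ∫ ω in E, μreg b (X ω) ∂P := by rw [hEeq]
  -- Step B: the uniform intervention
  have hB : ∀ b : Fin m,
      ∫ ω in E, (if Astar ω = b then (1 : ℝ) else 0) * f (X ω) b (U ω) ∂P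
        = (1 / m) * ∫ ω in E, f (X ω) b (U ω) ∂P := by
    intro b
    have hindb : Measurable (fun ω => (if Astar ω = b then (1 : ℝ) else 0)) :=
      measurable_const.ite (hAstar (measurableSet_singleton b)) measurable_const
    have hFbmW : StronglyMeasurable[MeasurableSpace.comap W inferInstance]
        (fun ω => f (X ω) b (U ω)) := by
      have hmap : Measurable (fun p : 𝒳 × Fin m × 𝒰 => f p.1 b p.2.2) :=
        hf.comp (measurable_fst.prodMk (measurable_const.prodMk
          (measurable_snd.comp measurable_snd)))
      exact (hmap.comp hWmW).stronglyMeasurable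
    have hprodint : Integrable ((fun ω => f (X ω) b (U ω))
        * (fun ω => (if Astar ω = b then (1 : ℝ) else 0))) P := by
      refine integrable_of_bdd (C := |C| * 1) ?_ ?_
      · exact ((hFbmeas b).mul hindb).aestronglyMeasurable
      · intro x
        rw [Pi.mul_apply, abs_mul]
        refine mul_le_mul ((hfbdd _ _ _).trans (le_abs_self C)) ?_ (abs_nonneg _) (abs_nonneg _)
        by_cases h : Astar x = b <;> simp [h]
    have hindint : Integrable (fun ω => (if Astar ω = b then (1 : ℝ) else 0)) P := by
      refine integrable_of_bdd (C := 1) hindb.aestronglyMeasurable ?_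
      intro x
      by_cases h : Astar x = b <;> simp [h]
    have hpullW : P[(fun ω => f (X ω) b (U ω)) * (fun ω => (if Astar ω = b then (1 : ℝ) else 0)) |
          MeasurableSpace.comap W inferInstance]
        =ᵐ[P] (fun ω => f (X ω) b (U ω)) * P[fun ω => (if Astar ω = b then (1 : ℝ) else 0) |
          MeasurableSpace.comap W inferInstance] :=
      condExp_mul_of_stronglyMeasurable_left hFbmW hprodint hindint
    calc ∫ ω in E, (if Astar ω = b then (1 : ℝ) else 0) * f (X ω) b (U ω) ∂P
        = ∫ ω in E, ((fun ω => f (X ω) b (U ω))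
            * (fun ω => (if Astar ω = b then (1 : ℝ) else 0))) ω ∂P := by
          refine setIntegral_congr_fun hEmeas fun ω _ => ?_
          rw [Pi.mul_apply, mul_comm]
      _ = ∫ ω in E, (P[(fun ω => f (X ω) b (U ω))
            * (fun ω => (if Astar ω = b then (1 : ℝ) else 0)) |
            MeasurableSpace.comap W inferInstance]) ω ∂P :=
          (setIntegral_condExp hmW hprodint hEmW).symm
      _ = ∫ ω in E, f (X ω) b (U ω) * (1 / m) ∂P := by
          refine integral_congr_ae (ae_restrict_of_ae ?_)
          filter_upwards [hpullW, hπstar b] with ω h1 h2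
          rw [h1, Pi.mul_apply, ← h2]
      _ = (1 / m) * ∫ ω in E, f (X ω) b (U ω) ∂P := by
          rw [integral_mul_const, mul_comm]
  -- assembling the numerator
  have hnum : ∫ ω in E, f (X ω) (Astar ω) (U ω) ∂P
      = ∑ b : Fin m, (1 / m : ℝ) * ∫ ω in E, μreg b (X ω) ∂P := by
    have hptwise : ∀ ω, f (X ω) (Astar ω) (U ω)
        = ∑ b : Fin m, (if Astar ω = b then (1 : ℝ) else 0) * f (X ω) b (U ω) := by
      intro ω
      have : ∀ b : Fin m, (if Astar ω = b then (1 : ℝ) else 0) * f (X ω) b (U ω)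
          = if b = Astar ω then f (X ω) b (U ω) else 0 := by
        intro b
        by_cases h : Astar ω = b
        · rw [if_pos h, if_pos h.symm, one_mul]
        · rw [if_neg h, if_neg (Ne.symm h), zero_mul]
      rw [Finset.sum_congr rfl fun b _ => this b, Finset.sum_ite_eq' Finset.univ (Astar ω)]
      simp
    have hintb : ∀ b : Fin m, Integrable (fun ω => (if Astar ω = b then (1 : ℝ) else 0)
        * f (X ω) b (U ω)) (P.restrict E) := by
      intro b
      refine (integrable_of_bdd (C := 1 * |C|) ?_ ?_).restrict
      · exact ((measurable_const.ite (hAstar (measurableSet_singleton b)) measurable_const).mul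
          (hFbmeas b)).aestronglyMeasurable
      · intro x
        rw [abs_mul]
        refine mul_le_mul ?_ ((hfbdd _ _ _).trans (le_abs_self C)) (abs_nonneg _) zero_le_one
        by_cases h : Astar x = b <;> simp [h]
    calc ∫ ω in E, f (X ω) (Astar ω) (U ω) ∂P
        = ∫ ω in E, ∑ b : Fin m, (if Astar ω = b then (1 : ℝ) else 0) * f (X ω) b (U ω) ∂P :=
          setIntegral_congr_fun hEmeas fun ω _ => hptwise ω
      _ = ∑ b : Fin m, ∫ ω in E, (if Astar ω = b then (1 : ℝ) else 0) * f (X ω) b (U ω) ∂P :=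
          integral_finset_sum Finset.univ fun b _ => hintb b
      _ = ∑ b : Fin m, (1 / m : ℝ) * ∫ ω in E, μreg b (X ω) ∂P := by
          refine Finset.sum_congr rfl fun b _ => ?_
          rw [hB b, hC b]
  rw [hnum, Finset.sum_div, Finset.mul_sum]
  exact Finset.sum_congr rfl fun b _ => mul_div_assoc _ _ _
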